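/- Let T be a connected topological space, let r ∈ ℕ, let Z ⊆ ℂ be a finite set, and let P : T → Polynomial ℂ be a family of polynomials such that: (i) for each n ∈ ℕ, the map t ↦ (P t).coeff n is continuous; (ii) for every t ∈ T, (P t).degree = r; (iii) for every t ∈ T, every root of P t lies in Z. Then the root multiset is constant: for all t, t' ∈ T, (P t).roots = (P t').roots as multisets; consequently, for all t, t' ∈ T there exists c ∈ ℂ, c ≠ 0, with P t' = c • P t. (The engine of the paper's Proposition 10.2: a holomorphic family of univariate polynomials of constant degree with constant root set has constant root multiplicities, hence is constant up to multiplication by nonzero constants.) -/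

import Mathlib

open Polynomial

/-- a continuous family, over a connected space `T`, of complex polynomials
of constant degree `r` all of whose roots lie in a fixed finite set `Z` has constant
multiset of roots; consequently any two members of the family agree up to multiplication
by a nonzero constant. -/
theorem roots_constant_of_connected_family {T : Type*} [TopologicalSpace T]
    [ConnectedSpace T] (r : ℕ) (Z : Set ℂ) (hZ : Z.Finite) (P : T → Polynomial ℂ)
    (hcont : ∀ n : ℕ, Continuous fun t => (P t).coeff n)
    (hdeg : ∀ t : T, (P t).degree = r)
    (hroots : ∀ t : T, ∀ z ∈ (P t).roots, z ∈ Z) :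
    ∀ t t' : T, (P t).roots = (P t').roots ∧ ∃ c : ℂ, c ≠ 0 ∧ P t' = c • P t := by
  have hPne : ∀ t, P t ≠ 0 := by
    intro t h
    have := hdeg t
    rw [h, degree_zero] at this
    exact WithBot.bot_ne_coe this
  have hnat : ∀ t, (P t).natDegree = r := fun t =>
    natDegree_eq_of_degree_eq_some (hdeg t)
  have hcard : ∀ t, (P t).roots.card = r := by
    intro t
    rw [← hnat t]
    exact splits_iff_card_roots.mp (IsAlgClosed.splits (P t))
  have hlc : ∀ t, (P t).coeff r ≠ 0 := by
    intro t
    have : (P t).coeff r = (P t).leadingCoeff := by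
      rw [leadingCoeff, hnat t]
    rw [this]
    exact mt leadingCoeff_eq_zero.mp (hPne t)
  -- characterization of the level sets by coefficient equations
  have key : ∀ (M : Multiset ℂ), M.card = r → ∀ t,
      ((P t).roots = M ↔ P t = C ((P t).coeff r) * (M.map fun z => X - C z).prod) := by
    intro M hM t
    constructor
    · intro h
      have h2 := C_leadingCoeff_mul_prod_multiset_X_sub_C
        (p := P t) (by rw [hcard t, hnat t])
      have hl : (P t).coeff r = (P t).leadingCoeff := by rw [leadingCoeff, hnat t]
      rw [h] at h2
      rw [hl, h2]
    · intro h
      conv_lhs => rw [h]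
      rw [roots_C_mul _ (hlc t), roots_multiset_prod_X_sub_C]
  have hclosed : ∀ M : Multiset ℂ, IsClosed {t | (P t).roots = M} := by
    intro M
    by_cases hM : M.card = r
    · have heq : {t | (P t).roots = M} =
          ⋂ n : ℕ, {t | (P t).coeff n =
            (P t).coeff r * ((M.map fun z => X - C z).prod.coeff n)} := by
        ext t
        simp only [Set.mem_setOf_eq, Set.mem_iInter]
        rw [key M hM t, Polynomial.ext_iff]
        constructor <;> intro h n <;> have := h n <;>
          simpa [coeff_C_mul] using this
      rw [heq]
      exact isClosed_iInter fun n =>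
        isClosed_eq (hcont n) ((hcont r).mul continuous_const)
    · have heq : {t | (P t).roots = M} = ∅ := by
        ext t
        simp only [Set.mem_setOf_eq, Set.mem_empty_iff_false, iff_false]
        intro h
        exact hM (h ▸ hcard t)
      rw [heq]
      exact isClosed_empty
  -- the roots multiset always lies in a fixed finite collection
  set m0 : Multiset ℂ := r • hZ.toFinset.val with hm0
  have hle : ∀ t, (P t).roots ≤ m0 := by
    intro t
    rw [Multiset.le_iff_count]
    intro z
    by_cases hz : z ∈ (P t).roots
    · have hz' : z ∈ Z := hroots t z hz
      have h1 : Multiset.count z (P t).roots ≤ r := by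
        rw [← hcard t]; exact Multiset.count_le_card z _
      have h2 : Multiset.count z m0 = r := by
        rw [hm0, Multiset.count_nsmul,
          Multiset.count_eq_one_of_mem hZ.toFinset.nodup (hZ.mem_toFinset.mpr hz'),
          mul_one]
      omega
    · simp [Multiset.count_eq_zero_of_notMem hz]
  set F : Finset (Multiset ℂ) := m0.powerset.toFinset with hF
  have hmemF : ∀ t, (P t).roots ∈ F := by
    intro t
    rw [hF, Multiset.mem_toFinset, Multiset.mem_powerset]
    exact hle t
  have hopen : ∀ M : Multiset ℂ, IsOpen {t | (P t).roots = M} := by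
    intro M
    rw [← isClosed_compl_iff]
    have heq : {t | (P t).roots = M}ᶜ = ⋃ M' ∈ F.erase M, {t | (P t).roots = M'} := by
      ext t
      simp only [Set.mem_compl_iff, Set.mem_setOf_eq, Set.mem_iUnion]
      constructor
      · intro h
        exact ⟨(P t).roots, Finset.mem_erase.mpr ⟨fun hc => h hc, hmemF t⟩, rfl⟩
      · rintro ⟨M', hM', hM''⟩ hc
        exact (Finset.mem_erase.mp hM').1 (hM'' ▸ hc ▸ rfl)
    rw [heq]
    exact Set.Finite.isClosed_biUnion (F.erase M).finite_toSet fun M' _ => hclosed M'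
  intro t t'
  have huniv : {s | (P s).roots = (P t).roots} = Set.univ :=
    IsClopen.eq_univ ⟨hclosed _, hopen _⟩ ⟨t, rfl⟩
  have hall : ∀ s, (P s).roots = (P t).roots := fun s =>
    Set.eq_univ_iff_forall.mp huniv s
  have hrt : (P t).roots = (P t').roots := (hall t').symm
  have h1 := (key _ (hcard t) t).mp rfl
  have h2 := (key _ (hcard t) t').mp (hall t')
  refine ⟨hrt, (P t').coeff r / (P t).coeff r, div_ne_zero (hlc t') (hlc t), ?_⟩
  rw [smul_eq_C_mul]
  set a := (P t).coeff r with ha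
  set b := (P t').coeff r with hb
  rw [h1, h2, ← mul_assoc, ← C_mul, div_mul_cancel₀ _ (hlc t)]
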